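/- Let $0<r<1<R$, let $\zeta$ be holomorphic and nonvanishing on the annulus $A=\{r<|z|<R\}$, and let $L$ be holomorphic on $A$ with $e^{L(z)}=\zeta(z)/z$ for all $z\in A$. Then: (a) for every nonzero integer $i$, $\frac{1}{2\pi i}\oint_{|z|=1}\frac{\zeta(z)^{-i}}{i}\,\frac{dz}{z} \;=\; -\frac{1}{2\pi i}\oint_{|z|=1}\zeta(z)^{-i-1}\,\zeta'(z)\,L(z)\,dz$; and (b) $\frac{1}{2\pi i}\oint_{|z|=1}L(z)\,\frac{dz}{z} \;=\; \frac{1}{2\pi i}\oint_{|z|=1}\zeta(z)^{-1}\,\zeta'(z)\,L(z)\,dz$. (Circle integrals counterclockwise.) -/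

import Mathlib

open Complex Metric Set

/-- Agreement of the two definitions of the flat coordinates `tⁱ` (Proposition 2.4 of
Wu–Zuo), expressed in the variable `z` with a holomorphic branch `L` of `log(ζ(z)/z)`. -/
theorem stmt_7 (r R : ℝ) (hr : 0 < r) (hr1 : r < 1) (hR : 1 < R)
    (ζ L : ℂ → ℂ)
    (hζ : DifferentiableOn ℂ ζ {z : ℂ | r < ‖z‖ ∧ ‖z‖ < R})
    (hne : ∀ z : ℂ, r < ‖z‖ → ‖z‖ < R → ζ z ≠ 0)
    (hL : DifferentiableOn ℂ L {z : ℂ | r < ‖z‖ ∧ ‖z‖ < R})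
    (hexp : ∀ z : ℂ, r < ‖z‖ → ‖z‖ < R →
      Complex.exp (L z) = ζ z / z) :
    (∀ i : ℤ, i ≠ 0 →
      (2 * Real.pi * Complex.I)⁻¹ * (∮ z in C(0, 1), ζ z ^ (-i) / (i : ℂ) / z)
        = -((2 * Real.pi * Complex.I)⁻¹ *
            ∮ z in C(0, 1), ζ z ^ (-i - 1) * deriv ζ z * L z)) ∧
    (2 * Real.pi * Complex.I)⁻¹ * (∮ z in C(0, 1), L z / z)
      = (2 * Real.pi * Complex.I)⁻¹ *
          ∮ z in C(0, 1), (ζ z)⁻¹ * deriv ζ z * L z := by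
  set A : Set ℂ := {z : ℂ | r < ‖z‖ ∧ ‖z‖ < R} with hA_def
  have hAopen : IsOpen A := by
    have : A = ((fun z : ℂ => ‖z‖) ⁻¹' Ioo r R) := by
      ext z; simp [hA_def, Ioo]
    rw [this]
    exact isOpen_Ioo.preimage continuous_norm
  have hsub : sphere (0 : ℂ) 1 ⊆ A := by
    intro z hz
    have : ‖z‖ = 1 := by simpa using hz
    exact ⟨by rw [this]; exact hr1, by rw [this]; exact hR⟩
  -- basic facts at points of A
  have hz0 : ∀ z ∈ A, z ≠ 0 := by
    intro z hz h0
    rw [h0] at hz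
    simp only [hA_def, mem_setOf_eq, norm_zero] at hz
    exact absurd hz.1 (not_lt.2 hr.le)
  have hζ0 : ∀ z ∈ A, ζ z ≠ 0 := fun z hz => hne z hz.1 hz.2
  have hζd : ∀ z ∈ A, HasDerivAt ζ (deriv ζ z) z := fun z hz =>
    ((hζ.differentiableAt (hAopen.mem_nhds hz)).hasDerivAt)
  have hLd : ∀ z ∈ A, HasDerivAt L (deriv L z) z := fun z hz =>
    ((hL.differentiableAt (hAopen.mem_nhds hz)).hasDerivAt)
  -- the key derivative formula for L
  have hL' : ∀ z ∈ A, HasDerivAt L (deriv ζ z / ζ z - z⁻¹) z := by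
    intro z hz
    have hz0' := hz0 z hz
    have hζ0' := hζ0 z hz
    have h1 := hLd z hz
    have h2 : HasDerivAt (fun w => Complex.exp (L w)) (Complex.exp (L z) * deriv L z) z := by
      simpa [mul_comm] using h1.cexp
    have h3 : HasDerivAt (fun w => ζ w / w) ((deriv ζ z * z - ζ z * 1) / z ^ 2) z :=
      (hζd z hz).div (hasDerivAt_id z) hz0'
    have heq : (fun w => ζ w / w) =ᶠ[nhds z] (fun w => Complex.exp (L w)) := by
      filter_upwards [hAopen.mem_nhds hz] with w hw
      exact (hexp w hw.1 hw.2).symm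
    have h2' : HasDerivAt (fun w => ζ w / w) (Complex.exp (L z) * deriv L z) z :=
      h2.congr_of_eventuallyEq heq
    have hde : Complex.exp (L z) * deriv L z = (deriv ζ z * z - ζ z * 1) / z ^ 2 :=
      h2'.unique h3
    rw [hexp z hz.1 hz.2] at hde
    have : deriv L z = deriv ζ z / ζ z - z⁻¹ := by
      field_simp at hde
      have hde' : ζ z * deriv L z * z = deriv ζ z * z - ζ z :=
        mul_right_cancel₀ hz0' (by linear_combination z * hde)
      field_simp
      linear_combination hde'
    rw [← this]
    exact h1
  have hζcont : ContinuousOn ζ (sphere (0:ℂ) 1) := (hζ.continuousOn).mono hsub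
  have hLcont : ContinuousOn L (sphere (0:ℂ) 1) := (hL.continuousOn).mono hsub
  have hdζcont : ContinuousOn (deriv ζ) (sphere (0:ℂ) 1) := by
    have := (hζ.analyticOnNhd hAopen).deriv
    exact (this.differentiableOn.continuousOn).mono hsub
  have hzcont : ContinuousOn (fun z : ℂ => z) (sphere (0:ℂ) 1) := continuousOn_id
  have hzne : ∀ z ∈ sphere (0:ℂ) 1, z ≠ 0 := fun z hz => hz0 z (hsub hz)
  have hζne : ∀ z ∈ sphere (0:ℂ) 1, ζ z ≠ 0 := fun z hz => hζ0 z (hsub hz)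
  constructor
  · -- part (a)
    intro i hi
    have hiC : (i : ℂ) ≠ 0 := Int.cast_ne_zero.mpr hi
    set f₁ : ℂ → ℂ := fun z => ζ z ^ (-i) / (i : ℂ) / z with hf₁
    set f₂ : ℂ → ℂ := fun z => ζ z ^ (-i - 1) * deriv ζ z * L z with hf₂
    have hint : (∮ z in C(0, 1), (f₁ z + f₂ z)) = 0 := by
      apply circleIntegral.integral_eq_zero_of_hasDerivWithinAt (f :=
        fun z => -(ζ z ^ (-i) * L z) / (i : ℂ) - ζ z ^ (-i) / ((i : ℂ) * (i : ℂ)))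
        zero_le_one
      intro z hz
      have hzA := hsub hz
      have hz0' := hz0 z hzA
      have hζ0' := hζ0 z hzA
      have hp : HasDerivAt (fun w => ζ w ^ (-i))
          (((-i : ℂ) * ζ z ^ (-i - 1)) * deriv ζ z) z := by
        have := (hasDerivAt_zpow (-i) (ζ z) (Or.inl hζ0')).comp z (hζd z hzA)
        simpa [Function.comp_def] using this
      have hF : HasDerivAt
          (fun w => -(ζ w ^ (-i) * L w) / (i : ℂ) - ζ w ^ (-i) / ((i : ℂ) * (i : ℂ)))
          (f₁ z + f₂ z) z := by
        have h := (((hp.mul (hL' z hzA)).neg.div_const (i : ℂ)).sub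
          (hp.div_const ((i : ℂ) * (i : ℂ))))
        refine h.congr_deriv ?_
        have hzp : ζ z ^ (-i) = ζ z ^ (-i - 1) * ζ z := by
          rw [← zpow_add_one₀ hζ0']; ring_nf
        simp only [hf₁, hf₂, hzp]
        field_simp
        ring
      exact hF.hasDerivWithinAt
    have hInt₁ : CircleIntegrable f₁ 0 1 := by
      apply ContinuousOn.circleIntegrable zero_le_one
      exact ((hζcont.zpow₀ (-i) (fun z hz => Or.inl (hζne z hz))).div_const _).div
        hzcont hzne
    have hInt₂ : CircleIntegrable f₂ 0 1 := by
      apply ContinuousOn.circleIntegrable zero_le_one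
      exact ((hζcont.zpow₀ (-i - 1) (fun z hz => Or.inl (hζne z hz))).mul hdζcont).mul hLcont
    have key : (∮ z in C(0, 1), f₁ z) = -(∮ z in C(0, 1), f₂ z) := by
      have h := circleIntegral.integral_sub (hInt₁.add hInt₂) hInt₂
      simp only [Pi.add_apply, add_sub_cancel_right] at h
      rw [h, hint]; ring
    rw [key]; ring
  · -- part (b)
    set g₁ : ℂ → ℂ := fun z => (ζ z)⁻¹ * deriv ζ z * L z with hg₁
    set g₂ : ℂ → ℂ := fun z => L z / z with hg₂
    have hint : (∮ z in C(0, 1), (g₁ z - g₂ z)) = 0 := by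
      apply circleIntegral.integral_eq_zero_of_hasDerivWithinAt
        (f := fun z => L z ^ 2 / 2) zero_le_one
      intro z hz
      have hzA := hsub hz
      have hz0' := hz0 z hzA
      have hζ0' := hζ0 z hzA
      have hF : HasDerivAt (fun w => L w ^ 2 / 2) (g₁ z - g₂ z) z := by
        have h := ((hL' z hzA).pow 2).div_const 2
        refine h.congr_deriv ?_
        simp only [hg₁, hg₂]
        field_simp
        ring
      exact hF.hasDerivWithinAt
    have hInt₁ : CircleIntegrable g₁ 0 1 := by
      apply ContinuousOn.circleIntegrable zero_le_one
      exact ((hζcont.inv₀ hζne).mul hdζcont).mul hLcont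
    have hInt₂ : CircleIntegrable g₂ 0 1 := by
      apply ContinuousOn.circleIntegrable zero_le_one
      exact hLcont.div hzcont hzne
    have hsplit : (∮ z in C(0, 1), g₁ z) - (∮ z in C(0, 1), g₂ z) = 0 := by
      rw [← circleIntegral.integral_sub hInt₁ hInt₂]; exact hint
    have : (∮ z in C(0, 1), g₂ z) = (∮ z in C(0, 1), g₁ z) := by
      linear_combination -hsplit
    rw [this]
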